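/- arXiv:2412.02716 — 3 statements merged into one kernel-verified Lean document; each statement's English description precedes it below -/
import Mathlib

section
/- Let η ∈ (0,1], η_h ∈ (0,1), HHV > 0, C_p > 0, P₀ ∈ ℝ with P₀ ≠ 0, and real numbers T_s, T_r with T_s ≠ T_r be given. Then there exists a unique tuple (P_{0e0c}, Q_{0e}, q_{0c0g}, q_{0g}, m_{0c0h}, m_{0h}, T^r_{0c0h}, T^s_{0h,l}, Δφ_{0h,l}, Δφ_{0c0h}) ∈ ℝ¹⁰ satisfying the electrolyser system with boundary conditions P_{0e} = P₀, Q_{0e0c} = 0, T^s_{0c0h} = T_s and T^r_{0h,l} = T_r; explicitly, P_{0e0c} = −P₀, Q_{0e} = 0, Δφ_{0c0h} = Δφ_{0h,l} = −η_h η P₀, q_{0c0g} = q_{0g} = −(1 − η_h) η P₀ / HHV, T^s_{0h,l} = T_s, T^r_{0c0h} = T_r, and m_{0c0h} = m_{0h} = −η_h η P₀ / (C_p (T_s − T_r)). Hence these boundary conditions make the electrolyser load-flow problem with known heat efficiency well-posed. -/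
/-- With boundary conditions `P_{0e} = P₀`, `Q_{0e0c} = 0`,
`T^s_{0c0h} = Ts`, `T^r_{0h,l} = Tr`, the electrolyser system with known heat
efficiency `η_h` has the unique solution given explicitly below. -/
theorem electrolyser_known_heat_eff_well_posed (η ηh HHV Cp P₀ Ts Tr : ℝ)
    (hη : 0 < η ∧ η ≤ 1) (hηh : 0 < ηh ∧ ηh < 1)
    (hHHV : 0 < HHV) (hCp : 0 < Cp) (hP : P₀ ≠ 0) (hT : Ts ≠ Tr) :
    ∀ P0e0c Q0e q0c0g q0g m0c0h m0h Tr0c0h Tshl dφhl dφc : ℝ,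
      (P₀ + P0e0c = 0 ∧
       Q0e + 0 = 0 ∧
       q0c0g - q0g = 0 ∧
       m0c0h - m0h = 0 ∧
       m0c0h * Ts - m0h * Tshl = 0 ∧
       -(m0c0h * Tr0c0h) + m0h * Tr = 0 ∧
       Cp * m0h * (Tshl - Tr) - dφhl = 0 ∧
       Cp * m0c0h * (Ts - Tr0c0h) - dφc = 0 ∧
       η * P0e0c - HHV * q0c0g - dφc = 0 ∧
       ηh * η * P0e0c - dφc = 0)
      ↔
      (P0e0c = -P₀ ∧ Q0e = 0 ∧ dφc = -(ηh * η * P₀) ∧ dφhl = -(ηh * η * P₀) ∧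
       q0c0g = -((1 - ηh) * η * P₀) / HHV ∧ q0g = -((1 - ηh) * η * P₀) / HHV ∧
       Tshl = Ts ∧ Tr0c0h = Tr ∧
       m0c0h = -(ηh * η * P₀) / (Cp * (Ts - Tr)) ∧
       m0h = -(ηh * η * P₀) / (Cp * (Ts - Tr))) := by
  intro P0e0c Q0e q0c0g q0g m0c0h m0h Tr0c0h Tshl dφhl dφc
  obtain ⟨hη0, hη1⟩ := hη
  obtain ⟨hηh0, hηh1⟩ := hηh
  have hTsub : Ts - Tr ≠ 0 := sub_ne_zero.mpr hT
  constructor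
  · rintro ⟨h1, h2, h3, h4, h5, h6, h7, h8, h9, h10⟩
    have hPc : P0e0c = -P₀ := by linarith
    have hdφc : dφc = -(ηh * η * P₀) := by rw [hPc] at h10; linarith
    have hdφcne : dφc ≠ 0 := by
      rw [hdφc]
      simp only [neg_ne_zero]
      positivity
    have hm : m0c0h = m0h := by linarith
    have hmne : m0c0h ≠ 0 := by
      intro h; rw [h] at h8; simp at h8; exact hdφcne (by linarith)
    have hTr : Tr0c0h = Tr := by
      rw [← hm] at h6
      have := mul_left_cancel₀ hmne (by linarith : m0c0h * Tr0c0h = m0c0h * Tr)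
      exact this
    have hTs : Tshl = Ts := by
      rw [← hm] at h5
      exact (mul_left_cancel₀ hmne (by linarith : m0c0h * Tshl = m0c0h * Ts))
    have hmval : m0c0h = -(ηh * η * P₀) / (Cp * (Ts - Tr)) := by
      rw [hTr] at h8
      rw [eq_div_iff (by positivity)]
      rw [hm] at h8 ⊢
      rw [← hdφc]; linarith [h8]
    have hdφhl : dφhl = -(ηh * η * P₀) := by
      rw [hTs] at h7
      rw [hTr, hm] at h8
      rw [← hdφc]; linarith
    have hq : q0c0g = -((1 - ηh) * η * P₀) / HHV := by
      rw [eq_div_iff hHHV.ne']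
      rw [hPc, hdφc] at h9; ring_nf; ring_nf at h9; linarith
    refine ⟨hPc, by linarith, hdφc, hdφhl, hq, by linarith, hTs, hTr, hmval, hm ▸ hmval⟩
  · rintro ⟨hPc, hQ, hdφc, hdφhl, hq1, hq2, hTs, hTr, hm1, hm2⟩
    subst hPc hQ hdφc hdφhl hq1 hq2 hTs hTr hm1 hm2
    refine ⟨by ring, by ring, by ring, by ring, by ring, by ring, ?_, ?_, ?_, by ring⟩
    · field_simp
      ring
    · field_simp
      ring
    · field_simp
      ring
end

section
/- Let η ∈ (0,1], HHV > 0, C_p > 0, and boundary data q₀ ≥ 0 (gas load), φ₀ > 0 (heat load), and real numbers T_s, T_r with T_s ≠ T_r be given. Then there exists a unique tuple (η_h, P_{0e}, P_{0e0c}, Q_{0e}, q_{0c0g}, m_{0c0h}, m_{0h}, T^r_{0c0h}, T^s_{0h,l}, Δφ_{0c0h}) ∈ ℝ¹⁰ satisfying the electrolyser system, where the heat efficiency η_h is treated as an unknown, with boundary conditions q_{0g} = q₀, Δφ_{0h,l} = φ₀, Q_{0e0c} = 0, T^s_{0c0h} = T_s and T^r_{0h,l} = T_r; explicitly, P_{0e0c}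 = (HHV · q₀ + φ₀)/η, P_{0e} = −P_{0e0c}, Q_{0e} = 0, η_h = φ₀/(HHV · q₀ + φ₀), q_{0c0g} = q₀, Δφ_{0c0h} = φ₀, T^s_{0h,l} = T_s, T^r_{0c0h} = T_r, and m_{0c0h} = m_{0h} = φ₀/(C_p (T_s − T_r)). Hence these boundary conditions make the electrolyser load-flow problem with unknown heat efficiency well-posed. -/
/-- Unknown heat efficiency case. With boundary conditions
`q_{0g} = q₀`, `Δφ_{0h,l} = φ₀`, `Q_{0e0c} = 0`, `T^s_{0c0h} = Ts`,
`T^r_{0h,l} = Tr`, the electrolyser system (with `η_h` an additional unknown)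
has the unique solution given explicitly below. -/
theorem electrolyser_unknown_heat_eff_well_posed (η HHV Cp q₀ φ₀ Ts Tr : ℝ)
    (hη : 0 < η ∧ η ≤ 1) (hHHV : 0 < HHV) (hCp : 0 < Cp)
    (hq : 0 ≤ q₀) (hφ : 0 < φ₀) (hT : Ts ≠ Tr) :
    ∀ ηh P0e P0e0c Q0e q0c0g m0c0h m0h Tr0c0h Tshl dφc : ℝ,
      (P0e + P0e0c = 0 ∧
       Q0e + 0 = 0 ∧
       q0c0g - q₀ = 0 ∧
       m0c0h - m0h = 0 ∧
       m0c0h * Ts - m0h * Tshl = 0 ∧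
       -(m0c0h * Tr0c0h) + m0h * Tr = 0 ∧
       Cp * m0h * (Tshl - Tr) - φ₀ = 0 ∧
       Cp * m0c0h * (Ts - Tr0c0h) - dφc = 0 ∧
       η * P0e0c - HHV * q0c0g - dφc = 0 ∧
       ηh * η * P0e0c - dφc = 0)
      ↔
      (P0e0c = (HHV * q₀ + φ₀) / η ∧ P0e = -P0e0c ∧ Q0e = 0 ∧
       ηh = φ₀ / (HHV * q₀ + φ₀) ∧
       q0c0g = q₀ ∧ dφc = φ₀ ∧ Tshl = Ts ∧ Tr0c0h = Tr ∧
       m0c0h = φ₀ / (Cp * (Ts - Tr)) ∧ m0h = φ₀ / (Cp * (Ts - Tr))) := by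
  obtain ⟨hη0, hη1⟩ := hη
  have hηne : η ≠ 0 := ne_of_gt hη0
  have hden : HHV * q₀ + φ₀ > 0 := by positivity
  have hdne : HHV * q₀ + φ₀ ≠ 0 := ne_of_gt hden
  have hTs : Ts - Tr ≠ 0 := sub_ne_zero.mpr hT
  have hCpT : Cp * (Ts - Tr) ≠ 0 := mul_ne_zero (ne_of_gt hCp) hTs
  intro ηh P0e P0e0c Q0e q0c0g m0c0h m0h Tr0c0h Tshl dφc
  constructor
  · rintro ⟨e1, e2, e3, e4, e5, e6, e7, e8, e9, e10⟩
    have hmeq : m0c0h = m0h := by linarith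
    subst hmeq
    have hm : m0c0h ≠ 0 := by
      intro h; rw [h] at e7; simp at e7; linarith
    have hTshl : Tshl = Ts := by
      have : m0c0h * (Ts - Tshl) = 0 := by ring_nf; linarith [e5]
      rcases mul_eq_zero.mp this with h | h
      · exact absurd h hm
      · linarith [sub_eq_zero.mp h]
    rw [hTshl] at e7
    have hTr0 : Tr0c0h = Tr := by
      have : m0c0h * (Tr0c0h - Tr) = 0 := by ring_nf; linarith [e6]
      rcases mul_eq_zero.mp this with h | h
      · exact absurd h hm
      · linarith [sub_eq_zero.mp h]
    rw [hTr0] at e8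
    have hm0 : m0c0h = φ₀ / (Cp * (Ts - Tr)) := by
      field_simp
      nlinarith [e7]
    have hdφ : dφc = φ₀ := by nlinarith [e7, e8]
    have hq0 : q0c0g = q₀ := by linarith
    have hP : P0e0c = (HHV * q₀ + φ₀) / η := by
      field_simp; nlinarith [e9]
    have hP0 : η * P0e0c = HHV * q₀ + φ₀ := by
      rw [hP]; field_simp
    refine ⟨hP, by linarith, by linarith, ?_, hq0, hdφ, hTshl, hTr0, hm0, hm0⟩
    have : ηh * (HHV * q₀ + φ₀) = φ₀ := by
      rw [← hP0]; nlinarith [e10]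
    field_simp
    linarith
  · rintro ⟨hP, hPe, hQ, hηh, hq0, hdφ, hTshl, hTr0, hm1, hm2⟩
    subst hP hPe hQ hηh hq0 hdφ hTshl hTr0 hm1 hm2
    refine ⟨by ring, by ring, by ring, by ring, by ring, by ring, ?_, ?_, ?_, ?_⟩
    · field_simp; try ring
    · field_simp; try ring
    · field_simp; try ring
    · field_simp; try ring
end

section
/- Suppose real variables satisfy the electrolyser system with P₀ := P_{0e} ≠ 0, Q_{0e0c} = 0, η > 0, η_h > 0, and C_p ≠ 0. Then the heat-side mass flows are nonzero: m_{0c0h} = m_{0h} ≠ 0 and T^s_{0c0h} ≠ T^r_{0c0h}. -/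
/-- In the electrolyser system with `P_{0e} ≠ 0`, `Q_{0e0c} = 0`,
`η > 0`, `η_h > 0`, `C_p ≠ 0`, the heat-side mass flows are nonzero and the
coupling supply and return temperatures differ. -/
theorem electrolyser_nonzero_mass_flow
    (η ηh HHV Cp P0e P0e0c Q0e Q0e0c q0c0g q0g m0c0h m0h
      Ts0c0h Tr0c0h Tshl Trhl dφhl dφc : ℝ)
    (h1 : P0e + P0e0c = 0)
    (h2 : Q0e + Q0e0c = 0)
    (h3 : q0c0g - q0g = 0)
    (h4 : m0c0h - m0h = 0)
    (h5 : m0c0h * Ts0c0h - m0h * Tshl = 0)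
    (h6 : -(m0c0h * Tr0c0h) + m0h * Trhl = 0)
    (h7 : Cp * m0h * (Tshl - Trhl) - dφhl = 0)
    (h8 : Cp * m0c0h * (Ts0c0h - Tr0c0h) - dφc = 0)
    (h9 : η * P0e0c - HHV * q0c0g - dφc = 0)
    (h10 : ηh * η * P0e0c - dφc = 0)
    (hP : P0e ≠ 0) (hQ : Q0e0c = 0) (hη : 0 < η) (hηh : 0 < ηh) (hCp : Cp ≠ 0) :
    m0c0h = m0h ∧ m0h ≠ 0 ∧ Ts0c0h ≠ Tr0c0h := by
  have hm : m0c0h = m0h := by linarith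
  have hP0e0c : P0e0c ≠ 0 := fun h => hP (by linarith)
  have hdφ : dφc ≠ 0 := by
    intro h
    have : ηh * η * P0e0c = 0 := by linarith
    rcases mul_eq_zero.mp this with h' | h'
    · rcases mul_eq_zero.mp h' with h'' | h'' <;> nlinarith
    · exact hP0e0c h'
  have key : Cp * m0c0h * (Ts0c0h - Tr0c0h) ≠ 0 := by
    intro h; apply hdφ; linarith
  refine ⟨hm, ?_, ?_⟩
  · intro h; apply key; rw [hm, h]; ring
  · intro h; apply key; rw [h]; ring
end
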